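/- In the block-random construction, let M ∈ ℝ^{m×n} be such that M S has orthonormal columns, and choose the diagonal scaling D_{jj} = ‖M_{·J_l}‖_F^{−1} for every j ∈ J_l, where M_{·J} is the column submatrix of M indexed by J. Then for every u ∈ ℝ^p: E‖M X u‖² = ‖u‖². -/

import Mathlib

open MeasureTheory ProbabilityTheory

/-- In the block-random construction `X = S Zᵀ + D R (I − Z Zᵀ)`, if `M S`
has orthonormal columns and the diagonal scaling is `D_{jj} = ‖M_{·J_l}‖_F⁻¹` for
`j ∈ J_l`, then `E‖M X u‖² = ‖u‖²` for every `u ∈ ℝ^p`. -/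
theorem X_expectation_scaled
    (m n p q : ℕ)
    (Ω : Type*) [MeasurableSpace Ω] (μ : Measure Ω) [IsProbabilityMeasure μ]
    (S : Matrix (Fin n) (Fin q) ℝ)
    (hScol : ∀ l, ∃ j, S j l ≠ 0)
    (hSdisj : ∀ l l' : Fin q, l ≠ l' → ∀ j, S j l = 0 ∨ S j l' = 0)
    (Z : Matrix (Fin p) (Fin q) ℝ)
    (hZnorm : ∀ l, ∑ k, (Z k l) ^ 2 = 1)
    (hZdisj : ∀ l l' : Fin q, l ≠ l' → ∀ k, Z k l = 0 ∨ Z k l' = 0)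
    (J : Fin q → Finset (Fin n)) (hJ : ∀ l j, j ∈ J l ↔ S j l ≠ 0)
    (K : Fin q → Finset (Fin p))
    (hKdisj : ∀ l l', l ≠ l' → Disjoint (K l) (K l'))
    (hKcover : ∀ k, ∃ l, k ∈ K l)
    (hZsupp : ∀ l k, Z k l ≠ 0 → k ∈ K l)
    (R : Ω → Matrix (Fin n) (Fin p) ℝ)
    (hRmeas : ∀ j k, Measurable (fun ω => R ω j k))
    (hRindep : iIndepFun
        (fun jk : Fin n × Fin p => fun ω => R ω jk.1 jk.2) μ)
    (hRmean : ∀ l : Fin q, ∀ j ∈ J l, ∀ k ∈ K l, ∫ ω, R ω j k ∂μ = 0)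
    (hRvar : ∀ l : Fin q, ∀ j ∈ J l, ∀ k ∈ K l, ∫ ω, (R ω j k) ^ 2 ∂μ = 1)
    (hRzero : ∀ j k, (∀ l : Fin q, j ∉ J l ∨ k ∉ K l) → ∀ ω, R ω j k = 0)
    (D : Matrix (Fin n) (Fin n) ℝ) (hDdiag : ∀ i j, i ≠ j → D i j = 0)
    -- M S has orthonormal columns
    (M : Matrix (Fin m) (Fin n) ℝ)
    (hMS : (M * S).transpose * (M * S) = 1)
    -- the diagonal scaling D_jj = ‖M_{·J_l}‖_F⁻¹ for j ∈ J_l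
    (hDscale : ∀ l : Fin q, ∀ j ∈ J l,
      D j j = (Real.sqrt (∑ i, ∑ j' ∈ J l, (M i j') ^ 2))⁻¹)
    (u : Fin p → ℝ) :
    ∫ ω, ∑ i,
        (((M * (S * Z.transpose + D * R ω * (1 - Z * Z.transpose))).mulVec u) i) ^ 2 ∂μ
      = ∑ k, (u k) ^ 2 := by
  classical
  set v : Fin p → ℝ := (1 - Z * Z.transpose).mulVec u with hv
  set w : Fin q → ℝ := Z.transpose.mulVec u with hw
  set a : Fin m → ℝ := ((M * S) * Z.transpose).mulVec u with ha
  set c : Fin m → Fin n × Fin p → ℝ := fun i jk => (M * D) i jk.1 * v jk.2 with hc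
  set f : Fin n × Fin p → Ω → ℝ := fun jk ω => R ω jk.1 jk.2 with hf
  set b : Fin m → Ω → ℝ := fun i ω => ∑ jk : Fin n × Fin p, c i jk * f jk ω with hb
  -- if (j,k) is in no block, R ≡ 0
  have hblock : ∀ j k, (¬ ∃ l, j ∈ J l ∧ k ∈ K l) → ∀ ω, R ω j k = 0 := by
    intro j k h ω
    refine hRzero j k (fun l => ?_) ω
    by_cases hj : j ∈ J l
    · exact Or.inr fun hk => h ⟨l, hj, hk⟩
    · exact Or.inl hj
  -- integrability of R²
  have hInt2 : ∀ j k, Integrable (fun ω => (R ω j k) ^ 2) μ := by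
    intro j k
    by_cases h : ∃ l, j ∈ J l ∧ k ∈ K l
    · obtain ⟨l, hj, hk⟩ := h
      by_contra hni
      have := hRvar l j hj k hk
      rw [integral_undef hni] at this
      norm_num at this
    · have hz := hblock j k h
      have : (fun ω => (R ω j k) ^ 2) = fun _ => (0 : ℝ) := by
        funext ω; rw [hz ω]; ring
      rw [this]; exact integrable_const 0
  -- integrability of R
  have hInt1 : ∀ j k, Integrable (fun ω => R ω j k) μ := by
    intro j k
    have hm := (hRmeas j k).aestronglyMeasurable (μ := μ)
    exact ((memLp_two_iff_integrable_sq hm).2 (hInt2 j k)).integrable one_le_two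
  -- mean zero
  have hmean : ∀ j k, ∫ ω, R ω j k ∂μ = 0 := by
    intro j k
    by_cases h : ∃ l, j ∈ J l ∧ k ∈ K l
    · obtain ⟨l, hj, hk⟩ := h; exact hRmean l j hj k hk
    · have hz := hblock j k h
      simp only [hz, integral_zero]
  -- product of distinct entries integrates to 0, and products are integrable
  have hprodInt : ∀ p1 p2 : Fin n × Fin p,
      Integrable (fun ω => R ω p1.1 p1.2 * R ω p2.1 p2.2) μ := by
    intro p1 p2
    by_cases h : p1 = p2
    · subst h
      have := hInt2 p1.1 p1.2
      simpa [pow_two] using this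
    · have hind := hRindep.indepFun h
      exact hind.integrable_mul (hInt1 p1.1 p1.2) (hInt1 p2.1 p2.2)
  have hprod0 : ∀ p1 p2 : Fin n × Fin p, p1 ≠ p2 →
      ∫ ω, R ω p1.1 p1.2 * R ω p2.1 p2.2 ∂μ = 0 := by
    intro p1 p2 h
    have hind := hRindep.indepFun h
    have := hind.integral_fun_mul_eq_mul_integral (hInt1 p1.1 p1.2).aestronglyMeasurable
      (hInt1 p2.1 p2.2).aestronglyMeasurable
    rw [this, hmean, hmean, mul_zero]
  -- pointwise decomposition of the integrand
  have hpoint : ∀ ω i,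
      ((M * (S * Z.transpose + D * R ω * (1 - Z * Z.transpose))).mulVec u) i
        = a i + b i ω := by
    intro ω i
    have h1 : M * (S * Z.transpose + D * R ω * (1 - Z * Z.transpose))
        = (M * S) * Z.transpose + ((M * D) * R ω) * (1 - Z * Z.transpose) := by
      rw [Matrix.mul_add]
      rw [← Matrix.mul_assoc, ← Matrix.mul_assoc, ← Matrix.mul_assoc]
    have h2 : (((M * D) * R ω) * (1 - Z * Z.transpose)).mulVec u
        = (M * D).mulVec ((R ω).mulVec v) := by
      rw [← Matrix.mulVec_mulVec, ← Matrix.mulVec_mulVec]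
    rw [h1, Matrix.add_mulVec]
    simp only [Pi.add_apply]
    congr 1
    rw [congrFun h2 i]
    show (M * D).mulVec ((R ω).mulVec v) i = ∑ jk : Fin n × Fin p, c i jk * f jk ω
    rw [Fintype.sum_prod_type]
    simp only [Matrix.mulVec, dotProduct]
    rw [Finset.sum_congr rfl (fun j _ => Finset.mul_sum _ _ _)]
    refine Finset.sum_congr rfl (fun j _ => Finset.sum_congr rfl (fun k _ => ?_))
    simp only [hc, hf]
    ring
  set E2 : Fin n → Fin p → ℝ := fun j k => ∫ ω, (R ω j k) ^ 2 ∂μ with hE2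
  have expand : ∀ (i : Fin m) (ω : Ω), (a i + b i ω) ^ 2
      = (a i ^ 2 + ∑ jk : Fin n × Fin p, (2 * a i * c i jk) * f jk ω)
        + ∑ p1 : Fin n × Fin p, ∑ p2 : Fin n × Fin p,
            (c i p1 * c i p2) * (f p1 ω * f p2 ω) := by
    intro i ω
    have hsq : (b i ω) ^ 2 = ∑ p1 : Fin n × Fin p, ∑ p2 : Fin n × Fin p,
        (c i p1 * c i p2) * (f p1 ω * f p2 ω) := by
      rw [pow_two]
      show (∑ jk : Fin n × Fin p, c i jk * f jk ω)
          * (∑ jk : Fin n × Fin p, c i jk * f jk ω) = _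
      rw [Finset.sum_mul_sum]
      exact Finset.sum_congr rfl fun p1 _ => Finset.sum_congr rfl fun p2 _ => by ring
    have hmid : 2 * a i * b i ω
        = ∑ jk : Fin n × Fin p, (2 * a i * c i jk) * f jk ω := by
      show 2 * a i * (∑ jk : Fin n × Fin p, c i jk * f jk ω) = _
      rw [Finset.mul_sum]
      exact Finset.sum_congr rfl fun jk _ => by ring
    rw [add_sq, hsq, hmid, add_assoc]
  have hIntTerm : ∀ i, Integrable (fun ω => (a i + b i ω) ^ 2) μ := by
    intro i
    have heq : (fun ω => (a i + b i ω) ^ 2) = fun ω =>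
        (a i ^ 2 + ∑ jk : Fin n × Fin p, (2 * a i * c i jk) * f jk ω)
        + ∑ p1 : Fin n × Fin p, ∑ p2 : Fin n × Fin p,
            (c i p1 * c i p2) * (f p1 ω * f p2 ω) := funext (expand i)
    rw [heq]
    exact ((integrable_const _).add
        (integrable_finset_sum _ fun jk _ => (hInt1 jk.1 jk.2).const_mul _)).add
      (integrable_finset_sum _ fun p1 _ =>
        integrable_finset_sum _ fun p2 _ => (hprodInt p1 p2).const_mul _)
  have key : ∀ i, ∫ ω, (a i + b i ω) ^ 2 ∂μ
      = a i ^ 2 + ∑ jk : Fin n × Fin p, (c i jk) ^ 2 * E2 jk.1 jk.2 := by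
    intro i
    have hIntF1 : Integrable
        (fun ω => ∑ jk : Fin n × Fin p, (2 * a i * c i jk) * f jk ω) μ :=
      integrable_finset_sum _ fun jk _ => (hInt1 jk.1 jk.2).const_mul _
    have hIntF2 : Integrable (fun ω => ∑ p1 : Fin n × Fin p, ∑ p2 : Fin n × Fin p,
        (c i p1 * c i p2) * (f p1 ω * f p2 ω)) μ :=
      integrable_finset_sum _ fun p1 _ =>
        integrable_finset_sum _ fun p2 _ => (hprodInt p1 p2).const_mul _
    have hI1 : ∫ ω, ∑ jk : Fin n × Fin p, (2 * a i * c i jk) * f jk ω ∂μ = 0 := by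
      rw [integral_finset_sum _ fun jk _ => (hInt1 jk.1 jk.2).const_mul _]
      refine Finset.sum_eq_zero fun jk _ => ?_
      rw [integral_const_mul]
      have : ∫ ω, f jk ω ∂μ = 0 := hmean jk.1 jk.2
      rw [this, mul_zero]
    have hI2 : ∫ ω, ∑ p1 : Fin n × Fin p, ∑ p2 : Fin n × Fin p,
        (c i p1 * c i p2) * (f p1 ω * f p2 ω) ∂μ
        = ∑ jk : Fin n × Fin p, (c i jk) ^ 2 * E2 jk.1 jk.2 := by
      rw [integral_finset_sum _ fun p1 _ =>
        integrable_finset_sum _ fun p2 _ => (hprodInt p1 p2).const_mul _]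
      refine Finset.sum_congr rfl fun p1 _ => ?_
      rw [integral_finset_sum _ fun p2 _ => (hprodInt p1 p2).const_mul _]
      rw [Finset.sum_eq_single p1]
      · rw [integral_const_mul]
        have : ∫ ω, f p1 ω * f p1 ω ∂μ = E2 p1.1 p1.2 := by
          simp only [hE2, hf]
          congr 1
          funext ω
          ring
        rw [this, ← pow_two]
      · intro p2 _ hne
        rw [integral_const_mul, hprod0 p1 p2 (Ne.symm hne), mul_zero]
      · intro habs
        exact absurd (Finset.mem_univ p1) habs
    calc ∫ ω, (a i + b i ω) ^ 2 ∂μ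
        = ∫ ω, ((a i ^ 2 + ∑ jk : Fin n × Fin p, (2 * a i * c i jk) * f jk ω)
            + ∑ p1 : Fin n × Fin p, ∑ p2 : Fin n × Fin p,
              (c i p1 * c i p2) * (f p1 ω * f p2 ω)) ∂μ :=
          integral_congr_ae (Filter.Eventually.of_forall (expand i))
      _ = (∫ ω, (a i ^ 2 + ∑ jk : Fin n × Fin p, (2 * a i * c i jk) * f jk ω) ∂μ)
            + ∫ ω, ∑ p1 : Fin n × Fin p, ∑ p2 : Fin n × Fin p,
              (c i p1 * c i p2) * (f p1 ω * f p2 ω) ∂μ :=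
          integral_add ((integrable_const _).add hIntF1) hIntF2
      _ = a i ^ 2 + ∑ jk : Fin n × Fin p, (c i jk) ^ 2 * E2 jk.1 jk.2 := by
          rw [integral_add (integrable_const _) hIntF1, hI1, hI2,
            integral_const]
          simp
  -- Part A: orthonormal columns
  have partA : ∑ i, a i ^ 2 = ∑ l, w l ^ 2 := by
    have hax : a = (M * S).mulVec w := by
      rw [ha, hw, Matrix.mulVec_mulVec]
    calc ∑ i, a i ^ 2 = dotProduct a a := by
          simp [dotProduct, pow_two]
      _ = dotProduct w w := by
          rw [hax, Matrix.dotProduct_mulVec, ← Matrix.mulVec_transpose,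
            Matrix.mulVec_mulVec, hMS, Matrix.one_mulVec]
      _ = ∑ l, w l ^ 2 := by simp [dotProduct, pow_two]
  -- (M*D) entries
  have hMD : ∀ i j, (M * D) i j = M i j * D j j := by
    intro i j
    rw [Matrix.mul_apply]
    rw [Finset.sum_eq_single j]
    · intro j' _ hne
      rw [hDdiag j' j hne, mul_zero]
    · intro habs; exact absurd (Finset.mem_univ j) habs
  -- positivity of the Frobenius norms
  have hTpos : ∀ l : Fin q, 0 < ∑ i, ∑ j' ∈ J l, (M i j') ^ 2 := by
    intro l
    by_contra hle
    push_neg at hle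
    have hT0 : ∑ i, ∑ j' ∈ J l, (M i j') ^ 2 = 0 :=
      le_antisymm hle (Finset.sum_nonneg fun i _ => Finset.sum_nonneg fun j _ => sq_nonneg _)
    have hM0 : ∀ i, ∀ j ∈ J l, M i j = 0 := by
      intro i j hj
      have h1 := (Finset.sum_eq_zero_iff_of_nonneg
        (fun i _ => Finset.sum_nonneg fun j _ => sq_nonneg _)).1 hT0 i (Finset.mem_univ i)
      have h2 := (Finset.sum_eq_zero_iff_of_nonneg (fun j _ => sq_nonneg _)).1 h1 j hj
      exact pow_eq_zero_iff two_ne_zero |>.1 h2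
    have hcol : ∀ i, (M * S) i l = 0 := by
      intro i
      rw [Matrix.mul_apply]
      refine Finset.sum_eq_zero fun j _ => ?_
      by_cases hj : j ∈ J l
      · rw [hM0 i j hj, zero_mul]
      · have : S j l = 0 := by
          by_contra hS; exact hj ((hJ l j).2 hS)
        rw [this, mul_zero]
    have h1 := congrFun (congrFun hMS l) l
    rw [Matrix.mul_apply, Matrix.one_apply_eq] at h1
    simp only [Matrix.transpose_apply] at h1
    rw [Finset.sum_eq_zero (fun i _ => by rw [hcol i, mul_zero])] at h1
    norm_num at h1
  -- the inner sum over j equals one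
  have inner1 : ∀ k, ∑ j, (∑ i, (M i j) ^ 2) * (D j j) ^ 2 * E2 j k = 1 := by
    intro k
    obtain ⟨l, hk⟩ := hKcover k
    have hvanish : ∀ j ∈ Finset.univ, j ∉ J l →
        (∑ i, (M i j) ^ 2) * (D j j) ^ 2 * E2 j k = 0 := by
      intro j _ hj
      have hz : ∀ ω, R ω j k = 0 := by
        refine hRzero j k fun l' => ?_
        by_cases hl : l' = l
        · subst hl; exact Or.inl hj
        · exact Or.inr fun hkl' => (Finset.disjoint_left.1 (hKdisj l' l hl)) hkl' hk
      have hE0 : E2 j k = 0 := by simp [hE2, hz]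
      rw [hE0, mul_zero]
    rw [← Finset.sum_subset (Finset.subset_univ (J l)) hvanish]
    set T := ∑ i, ∑ j' ∈ J l, (M i j') ^ 2 with hTdef
    have hTne : T ≠ 0 := ne_of_gt (hTpos l)
    have hTnn : (0:ℝ) ≤ T := le_of_lt (hTpos l)
    have hstep : ∀ j ∈ J l,
        (∑ i, (M i j) ^ 2) * (D j j) ^ 2 * E2 j k = (∑ i, (M i j) ^ 2) * T⁻¹ := by
      intro j hj
      have hE : E2 j k = 1 := hRvar l j hj k hk
      have hD : (D j j) ^ 2 = T⁻¹ := by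
        rw [hDscale l j hj, ← hTdef, inv_pow, Real.sq_sqrt hTnn]
      rw [hE, hD, mul_one]
    rw [Finset.sum_congr rfl hstep, ← Finset.sum_mul]
    rw [Finset.sum_comm, ← hTdef]
    exact mul_inv_cancel₀ hTne
  -- Part B
  have partB : ∑ i, ∑ jk : Fin n × Fin p, (c i jk) ^ 2 * E2 jk.1 jk.2
      = ∑ k, v k ^ 2 := by
    calc ∑ i, ∑ jk : Fin n × Fin p, (c i jk) ^ 2 * E2 jk.1 jk.2
        = ∑ i, ∑ j, ∑ k, (M i j) ^ 2 * ((D j j) ^ 2 * (v k ^ 2 * E2 j k)) := by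
          refine Finset.sum_congr rfl fun i _ => ?_
          rw [Fintype.sum_prod_type]
          refine Finset.sum_congr rfl fun j _ => Finset.sum_congr rfl fun k _ => ?_
          simp only [hc, hMD]
          ring
      _ = ∑ j, ∑ i, ∑ k, (M i j) ^ 2 * ((D j j) ^ 2 * (v k ^ 2 * E2 j k)) :=
          Finset.sum_comm
      _ = ∑ j, ∑ k, (∑ i, (M i j) ^ 2) * ((D j j) ^ 2 * (v k ^ 2 * E2 j k)) := by
          refine Finset.sum_congr rfl fun j _ => ?_
          rw [Finset.sum_comm]
          exact Finset.sum_congr rfl fun k _ => (Finset.sum_mul _ _ _).symm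
      _ = ∑ k, v k ^ 2 * ∑ j, (∑ i, (M i j) ^ 2) * (D j j) ^ 2 * E2 j k := by
          rw [Finset.sum_comm]
          refine Finset.sum_congr rfl fun k _ => ?_
          rw [Finset.mul_sum]
          exact Finset.sum_congr rfl fun j _ => by ring
      _ = ∑ k, v k ^ 2 := by
          refine Finset.sum_congr rfl fun k _ => ?_
          rw [inner1 k, mul_one]
  -- Part C
  have hZZ : Z.transpose * Z = 1 := by
    ext l l'
    rw [Matrix.mul_apply]
    by_cases h : l = l'
    · subst h
      rw [Matrix.one_apply_eq]
      simp only [Matrix.transpose_apply]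
      rw [← hZnorm l]
      exact Finset.sum_congr rfl fun k _ => by rw [pow_two]
    · rw [Matrix.one_apply_ne h]
      refine Finset.sum_eq_zero fun k _ => ?_
      simp only [Matrix.transpose_apply]
      rcases hZdisj l l' h k with h0 | h0 <;> rw [h0] <;> ring
  have hveq : v = u - Z.mulVec w := by
    rw [hv, hw, Matrix.sub_mulVec, Matrix.one_mulVec, ← Matrix.mulVec_mulVec]
  have hZw : ∑ k, (Z.mulVec w k) ^ 2 = ∑ l, w l ^ 2 := by
    calc ∑ k, (Z.mulVec w k) ^ 2 = dotProduct (Z.mulVec w) (Z.mulVec w) := by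
          simp [dotProduct, pow_two]
      _ = dotProduct w w := by
          rw [Matrix.dotProduct_mulVec, ← Matrix.mulVec_transpose,
            Matrix.mulVec_mulVec, hZZ, Matrix.one_mulVec]
      _ = ∑ l, w l ^ 2 := by simp [dotProduct, pow_two]
  have huZw : ∑ k, u k * (Z.mulVec w) k = ∑ l, w l ^ 2 := by
    calc ∑ k, u k * (Z.mulVec w) k = dotProduct u (Z.mulVec w) := rfl
      _ = dotProduct w w := by
          rw [Matrix.dotProduct_mulVec, ← Matrix.mulVec_transpose]
      _ = ∑ l, w l ^ 2 := by simp [dotProduct, pow_two]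
  have partC : (∑ l, w l ^ 2) + ∑ k, v k ^ 2 = ∑ k, u k ^ 2 := by
    have hvk : ∀ k, v k ^ 2
        = u k ^ 2 - 2 * (u k * (Z.mulVec w) k) + (Z.mulVec w k) ^ 2 := by
      intro k
      have : v k = u k - Z.mulVec w k := by rw [hveq]; rfl
      rw [this]; ring
    rw [Finset.sum_congr rfl fun k _ => hvk k]
    simp only [Finset.sum_add_distrib, Finset.sum_sub_distrib, ← Finset.mul_sum]
    rw [huZw, hZw]
    ring
  -- final assembly
  calc ∫ ω, ∑ i,
        (((M * (S * Z.transpose + D * R ω * (1 - Z * Z.transpose))).mulVec u) i) ^ 2 ∂μ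
      = ∫ ω, ∑ i, (a i + b i ω) ^ 2 ∂μ := by
        refine integral_congr_ae (Filter.Eventually.of_forall fun ω => ?_)
        exact Finset.sum_congr rfl fun i _ => by rw [hpoint ω i]
    _ = ∑ i, ∫ ω, (a i + b i ω) ^ 2 ∂μ := integral_finset_sum _ fun i _ => hIntTerm i
    _ = ∑ i, (a i ^ 2 + ∑ jk : Fin n × Fin p, (c i jk) ^ 2 * E2 jk.1 jk.2) :=
        Finset.sum_congr rfl fun i _ => key i
    _ = (∑ i, a i ^ 2) + ∑ i, ∑ jk : Fin n × Fin p, (c i jk) ^ 2 * E2 jk.1 jk.2 :=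
        Finset.sum_add_distrib
    _ = (∑ l, w l ^ 2) + ∑ k, v k ^ 2 := by rw [partA, partB]
    _ = ∑ k, u k ^ 2 := partC
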